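/- For m ≥ 2, there exists a 2-edge-coloring of K_{2m−1, 2m−1} containing no monochromatic C_{2m}. Hence br(C_{2m}, C_{2m}) ≥ 2m. -/

import Mathlib

def hasCycleLength {V : Type*} (G : SimpleGraph V) (l : ℕ) : Prop :=
  ∃ (v : V) (p : G.Walk v v), p.IsCycle ∧ p.length = l

open SimpleGraph

lemma nodup_length_le {V : Type*} {l : List V} (hl : l.Nodup)
    (f : V → ℕ) (c : ℕ) (hb : ∀ v ∈ l, f v < c)
    (hinj : ∀ v ∈ l, ∀ w ∈ l, f v = f w → v = w) : l.length ≤ c := by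
  have hnd : (l.map f).Nodup := hl.map_on hinj
  have hsub : (l.map f).toFinset ⊆ Finset.range c := by
    intro x hx
    simp only [List.mem_toFinset, List.mem_map] at hx
    obtain ⟨v, hv, rfl⟩ := hx
    simpa using hb v hv
  have h2 := Finset.card_le_card hsub
  rw [List.toFinset_card_of_nodup hnd, Finset.card_range, List.length_map] at h2
  exact h2

lemma crossing {V : Type*} {G : SimpleGraph V} {ρ : V → ℕ} {hub : V}
    (Hadj : ∀ u v, G.Adj u v → ρ u = ρ v ∨ u = hub ∨ v = hub) :
    ∀ {a b : V} (w : G.Walk a b), ρ a ≠ ρ b → hub ∈ w.support := by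
  intro a b w
  induction w with
  | nil => intro h; exact absurd rfl h
  | @cons u v c h q ih =>
    intro hab
    rcases Hadj _ _ h with heq | hu | hv
    · have hm := ih (by rw [← heq]; exact hab)
      rw [Walk.support_cons]
      exact List.mem_cons_of_mem _ hm
    · rw [← hu]; exact Walk.start_mem_support _
    · rw [← hv, Walk.support_cons]
      exact List.mem_cons_of_mem _ q.start_mem_support

lemma mem_tail_of_closed {V : Type*} {G : SimpleGraph V} {v : V} (p : G.Walk v v)
    (hp : p ≠ SimpleGraph.Walk.nil) {w : V} (hw : w ∈ p.support) : w ∈ p.support.tail := by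
  cases p with
  | nil => exact absurd rfl hp
  | cons h q =>
    rw [Walk.support_cons] at hw ⊢
    rw [List.tail_cons]
    rcases List.mem_cons.mp hw with rfl | hw'
    · exact q.end_mem_support
    · exact hw'

lemma no_two_regions {V : Type*} {G : SimpleGraph V} {ρ : V → ℕ} {hub : V}
    (Hadj : ∀ u v, G.Adj u v → ρ u = ρ v ∨ u = hub ∨ v = hub)
    {v : V} {p : G.Walk v v} (hc : p.IsCycle)
    {u w : V} (hu : u ∈ p.support) (hw : w ∈ p.support)
    (hne : ρ u ≠ ρ w) (hu2 : u ≠ hub) (hw2 : w ≠ hub) : False := by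
  classical
  have hc' := hc.rotate hu
  have hwt : w ∈ p.support.tail := mem_tail_of_closed p hc.ne_nil hw
  have hwt' : w ∈ (p.rotate u hu).support.tail :=
    ((Walk.support_rotate p u hu).mem_iff).mpr hwt
  have hw' : w ∈ (p.rotate u hu).support := List.mem_of_mem_tail hwt'
  have hspec := (p.rotate u hu).take_spec hw'
  set q := (p.rotate u hu).takeUntil w hw' with hq
  set r := (p.rotate u hu).dropUntil w hw' with hr
  have hhq : hub ∈ q.support := crossing Hadj q hne
  have hhr : hub ∈ r.support := crossing Hadj r (Ne.symm hne)
  have h1 : hub ∈ q.support.tail := by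
    rcases List.mem_cons.mp (by rwa [q.support_eq_cons] at hhq) with h | h
    · exact absurd h.symm hu2
    · exact h
  have h2 : hub ∈ r.support.tail := by
    rcases List.mem_cons.mp (by rwa [r.support_eq_cons] at hhr) with h | h
    · exact absurd h.symm hw2
    · exact h
  have hnd : (p.rotate u hu).support.tail.Nodup := hc'.support_nodup
  rw [← hspec, Walk.tail_support_append, List.nodup_append] at hnd
  exact hnd.2.2 hub h1 hub h2 rfl

lemma core {V : Type*} {G : SimpleGraph V} (ρ : V → ℕ) (hub pend : V) (m : ℕ) (hm : 2 ≤ m)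
    (Hadj : ∀ u v, G.Adj u v → ρ u = ρ v ∨ u = hub ∨ v = hub)
    (Hhub : ρ hub = 2) (Hpend : ρ pend = 3)
    (Hρ : ∀ v, ρ v = 0 ∨ ρ v = 1 ∨ v = hub ∨ v = pend)
    (H0 : ∀ l : List V, l.Nodup → (∀ v ∈ l, ρ v = 0 ∨ v = hub) → l.length ≤ 2*m - 1)
    (H1 : ∀ l : List V, l.Nodup → (∀ v ∈ l, ρ v = 1 ∨ v = hub) → l.length ≤ 2*m - 1) :
    ¬ hasCycleLength G (2*m) := by
  classical
  rintro ⟨v, p, hc, hlen⟩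
  have hnd := hc.support_nodup
  have hlt : p.support.tail.length = 2*m := by
    have h1 := p.length_support
    rw [List.length_tail, h1, hlen]
    omega
  have hhubpend : hub ≠ pend := by
    intro h; rw [h, Hpend] at Hhub; omega
  by_cases hex : ∃ u ∈ p.support.tail, ρ u = 0 ∨ ρ u = 1
  · obtain ⟨u, hut, hρu⟩ := hex
    have huS : u ∈ p.support := List.mem_of_mem_tail hut
    have hu2 : u ≠ hub := by
      intro h; rw [h, Hhub] at hρu; rcases hρu with h' | h' <;> omega
    by_cases hp : pend ∈ p.support.tail
    · refine no_two_regions Hadj hc huS (List.mem_of_mem_tail hp) ?_ hu2 ?_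
      · rw [Hpend]; rcases hρu with h' | h' <;> omega
      · intro h; rw [h, Hhub] at Hpend; omega
    · by_cases hw : ∃ w ∈ p.support.tail, ρ w ≠ ρ u ∧ w ≠ hub
      · obtain ⟨w, hwt, hwne, hwhub⟩ := hw
        exact no_two_regions Hadj hc huS (List.mem_of_mem_tail hwt) (Ne.symm hwne) hu2 hwhub
      · push_neg at hw
        have hall : ∀ w ∈ p.support.tail, ρ w = ρ u ∨ w = hub := by
          intro w hwm
          by_cases hww : ρ w = ρ u
          · exact Or.inl hww
          · exact Or.inr (hw w hwm hww)
        rcases hρu with h' | h'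
        · have hsub : ∀ w ∈ p.support.tail, ρ w = 0 ∨ w = hub := by
            intro w hwm
            rcases hall w hwm with h | h
            · exact Or.inl (by rw [h, h'])
            · exact Or.inr h
          have := H0 p.support.tail hnd hsub
          omega
        · have hsub : ∀ w ∈ p.support.tail, ρ w = 1 ∨ w = hub := by
            intro w hwm
            rcases hall w hwm with h | h
            · exact Or.inl (by rw [h, h'])
            · exact Or.inr h
          have := H1 p.support.tail hnd hsub
          omega
  · push_neg at hex
    have hall : ∀ u ∈ p.support.tail, u = hub ∨ u = pend := by
      intro u hu
      rcases Hρ u with h | h | h | h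
      · exact absurd h (hex u hu).1
      · exact absurd h (hex u hu).2
      · exact Or.inl h
      · exact Or.inr h
    have := nodup_length_le hnd (fun u => if u = hub then 0 else 1) 2
      (by intro u _; split <;> omega)
      (by intro a ha b hb hfe
          rcases hall a ha with rfl | rfl <;> rcases hall b hb with rfl | rfl <;>
            simp_all [hhubpend, Ne.symm hhubpend])
    omega

def sideRel (N k : ℕ) (i j : Fin N) : Prop :=
  (i : ℕ) = N - 1 ∨ ((i : ℕ) < k ∧ (j : ℕ) < k) ∨
    (k ≤ (i : ℕ) ∧ (i : ℕ) < N - 1 ∧ k ≤ (j : ℕ) ∧ (j : ℕ) < N - 1)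

def sideGraph {N : ℕ} (R : Fin N → Fin N → Prop) : SimpleGraph (Fin N ⊕ Fin N) where
  Adj u v := (∃ i j, u = Sum.inl i ∧ v = Sum.inr j ∧ R i j) ∨
    (∃ i j, v = Sum.inl i ∧ u = Sum.inr j ∧ R i j)
  symm := by
    refine ⟨?_⟩
    rintro u v (⟨i, j, h1, h2, h⟩ | ⟨i, j, h1, h2, h⟩)
    · exact Or.inr ⟨i, j, h1, h2, h⟩
    · exact Or.inl ⟨i, j, h1, h2, h⟩
  loopless := by
    refine ⟨?_⟩
    rintro (i | j) (⟨a, b, h1, h2, _⟩ | ⟨a, b, h1, h2, _⟩) <;> simp_all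

lemma sideGraph_adj_inl_inr {N : ℕ} (R : Fin N → Fin N → Prop) {i j : Fin N} :
    (sideGraph R).Adj (Sum.inl i) (Sum.inr j) ↔ R i j := by
  constructor
  · rintro (⟨a, b, h1, h2, h⟩ | ⟨a, b, h1, h2, h⟩)
    · rw [Sum.inl.injEq] at h1
      rw [Sum.inr.injEq] at h2
      rw [h1, h2]; exact h
    · exact absurd h1 (by simp)
  · intro h; exact Or.inl ⟨i, j, rfl, rfl, h⟩

def ρred (N k : ℕ) : Fin N ⊕ Fin N → ℕ
  | Sum.inl i => if (i : ℕ) < k then 0 else if (i : ℕ) < N - 1 then 1 else 2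
  | Sum.inr j => if (j : ℕ) < k then 0 else if (j : ℕ) < N - 1 then 1 else 3

def ρblue (N k : ℕ) : Fin N ⊕ Fin N → ℕ
  | Sum.inl i => if (i : ℕ) < k then 0 else if (i : ℕ) < N - 1 then 1 else 3
  | Sum.inr j => if (j : ℕ) < k then 1 else if (j : ℕ) < N - 1 then 0 else 2

lemma construction (m N k : ℕ) (hm : 2 ≤ m) (hN1 : 1 ≤ N) (hkm : k ≤ m - 1)
    (hkN : k ≤ N - 1) (hNk : N - 1 - k ≤ m - 1) (hNm : N ≤ 2 * m - 1) :
    ∃ red : SimpleGraph (Fin N ⊕ Fin N),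
      red ≤ completeBipartiteGraph (Fin N) (Fin N) ∧
      ¬ hasCycleLength red (2 * m) ∧
      ¬ hasCycleLength (completeBipartiteGraph (Fin N) (Fin N) \ red) (2 * m) := by
  have hN1' : N - 1 < N := by omega
  set hubL : Fin N ⊕ Fin N := Sum.inl ⟨N - 1, hN1'⟩ with hhubL
  set hubR : Fin N ⊕ Fin N := Sum.inr ⟨N - 1, hN1'⟩ with hhubR
  refine ⟨sideGraph (sideRel N k), ?_, ?_, ?_⟩
  · rintro u v (⟨i, j, rfl, rfl, _⟩ | ⟨i, j, rfl, rfl, _⟩) <;> simp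
  · apply core (ρred N k) hubL hubR m hm
    · rintro u v (⟨i, j, rfl, rfl, hR⟩ | ⟨i, j, rfl, rfl, hR⟩)
      · rcases hR with h1 | ⟨h2, h3⟩ | ⟨h4, h5, h6, h7⟩
        · exact Or.inr (Or.inl (by rw [hhubL]; exact congrArg Sum.inl (Fin.ext h1)))
        · left; simp only [ρred]; rw [if_pos h2, if_pos h3]
        · left; simp only [ρred]
          rw [if_neg (by omega), if_pos h5, if_neg (by omega), if_pos h7]
      · rcases hR with h1 | ⟨h2, h3⟩ | ⟨h4, h5, h6, h7⟩
        · exact Or.inr (Or.inr (by rw [hhubL]; exact congrArg Sum.inl (Fin.ext h1)))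
        · left; simp only [ρred]; rw [if_pos h3, if_pos h2]
        · left; simp only [ρred]
          rw [if_neg (by omega), if_pos h7, if_neg (by omega), if_pos h5]
    · simp only [hhubL, ρred]
      rw [if_neg (by omega), if_neg (by omega)]
    · simp only [hhubR, ρred]
      rw [if_neg (by omega), if_neg (by omega)]
    · intro w
      rcases w with i | j
      · by_cases h1 : (i : ℕ) < k
        · exact Or.inl (by simp only [ρred]; rw [if_pos h1])
        · by_cases h2 : (i : ℕ) < N - 1
          · exact Or.inr (Or.inl (by simp only [ρred]; rw [if_neg h1, if_pos h2]))
          · refine Or.inr (Or.inr (Or.inl ?_))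
            rw [hhubL]; exact congrArg Sum.inl (Fin.ext (show (i : ℕ) = N - 1 by have := i.isLt; omega))
      · by_cases h1 : (j : ℕ) < k
        · exact Or.inl (by simp only [ρred]; rw [if_pos h1])
        · by_cases h2 : (j : ℕ) < N - 1
          · exact Or.inr (Or.inl (by simp only [ρred]; rw [if_neg h1, if_pos h2]))
          · refine Or.inr (Or.inr (Or.inr ?_))
            rw [hhubR]; exact congrArg Sum.inr (Fin.ext (show (j : ℕ) = N - 1 by have := j.isLt; omega))
    · intro l hl hmem
      have key : ∀ w ∈ l, (∃ i : Fin N, w = Sum.inl i ∧ ((i : ℕ) < k ∨ (i : ℕ) = N - 1)) ∨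
          (∃ j : Fin N, w = Sum.inr j ∧ (j : ℕ) < k) := by
        intro w hw
        rcases hmem w hw with h | h
        · rcases w with i | j
          · left; refine ⟨i, rfl, Or.inl ?_⟩
            simp only [ρred] at h; split_ifs at h with h1 h2 <;> omega
          · right; refine ⟨j, rfl, ?_⟩
            simp only [ρred] at h; split_ifs at h with h1 h2 <;> omega
        · left; exact ⟨⟨N - 1, hN1'⟩, by rw [h, hhubL], Or.inr rfl⟩
      apply nodup_length_le hl (fun w => match w with
        | Sum.inl i => if (i : ℕ) = N - 1 then 2 * m - 2 else (i : ℕ)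
        | Sum.inr j => (j : ℕ) + k) (2 * m - 1)
      · intro w hw
        rcases key w hw with ⟨i, rfl, hi⟩ | ⟨j, rfl, hj⟩
        · dsimp only; split_ifs <;> omega
        · dsimp only; omega
      · intro a ha b hb hfe
        rcases key a ha with ⟨i, rfl, hi⟩ | ⟨j, rfl, hj⟩ <;>
          rcases key b hb with ⟨i', rfl, hi'⟩ | ⟨j', rfl, hj'⟩
        · dsimp only at hfe
          refine congrArg Sum.inl (Fin.ext ?_)
          split_ifs at hfe <;> omega
        · exfalso; dsimp only at hfe; split_ifs at hfe <;> omega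
        · exfalso; dsimp only at hfe; split_ifs at hfe <;> omega
        · dsimp only at hfe
          exact congrArg Sum.inr (Fin.ext (by omega))
    · intro l hl hmem
      have key : ∀ w ∈ l, (∃ i : Fin N, w = Sum.inl i ∧ ((k ≤ (i : ℕ) ∧ (i : ℕ) < N - 1) ∨ (i : ℕ) = N - 1)) ∨
          (∃ j : Fin N, w = Sum.inr j ∧ k ≤ (j : ℕ) ∧ (j : ℕ) < N - 1) := by
        intro w hw
        rcases hmem w hw with h | h
        · rcases w with i | j
          · left; refine ⟨i, rfl, Or.inl ?_⟩
            simp only [ρred] at h; split_ifs at h with h1 h2 <;> omega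
          · right; refine ⟨j, rfl, ?_⟩
            simp only [ρred] at h; split_ifs at h with h1 h2 <;> omega
        · left; exact ⟨⟨N - 1, hN1'⟩, by rw [h, hhubL], Or.inr rfl⟩
      apply nodup_length_le hl (fun w => match w with
        | Sum.inl i => if (i : ℕ) = N - 1 then 2 * m - 2 else (i : ℕ) - k
        | Sum.inr j => ((j : ℕ) - k) + (m - 1)) (2 * m - 1)
      · intro w hw
        rcases key w hw with ⟨i, rfl, hi⟩ | ⟨j, rfl, hj⟩
        · dsimp only; split_ifs <;> omega
        · dsimp only; omega
      · intro a ha b hb hfe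
        rcases key a ha with ⟨i, rfl, hi⟩ | ⟨j, rfl, hj⟩ <;>
          rcases key b hb with ⟨i', rfl, hi'⟩ | ⟨j', rfl, hj'⟩
        · dsimp only at hfe
          refine congrArg Sum.inl (Fin.ext ?_)
          split_ifs at hfe <;> omega
        · exfalso; dsimp only at hfe; split_ifs at hfe <;> omega
        · exfalso; dsimp only at hfe; split_ifs at hfe <;> omega
        · dsimp only at hfe
          exact congrArg Sum.inr (Fin.ext (by omega))
  · apply core (ρblue N k) hubR hubL m hm
    · intro u v huv
      rw [SimpleGraph.sdiff_adj] at huv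
      obtain ⟨hK, hnr⟩ := huv
      rcases u with i | j <;> rcases v with i' | j'
      · simp at hK
      · rw [sideGraph_adj_inl_inr] at hnr
        by_cases hjN : (j' : ℕ) = N - 1
        · exact Or.inr (Or.inr (by rw [hhubR]; exact congrArg Sum.inr (Fin.ext hjN)))
        · left
          have hiN : (i : ℕ) ≠ N - 1 := fun h => hnr (Or.inl h)
          by_cases hik : (i : ℕ) < k
          · have hjk : ¬ (j' : ℕ) < k := fun h => hnr (Or.inr (Or.inl ⟨hik, h⟩))
            simp only [ρblue]
            rw [if_pos hik, if_neg hjk, if_pos (by have := j'.isLt; omega)]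
          · have hjk : (j' : ℕ) < k := by
              by_contra hjk
              exact hnr (Or.inr (Or.inr ⟨by omega, by have := i.isLt; omega, by omega,
                by have := j'.isLt; omega⟩))
            simp only [ρblue]
            rw [if_neg hik, if_pos (by have := i.isLt; omega), if_pos hjk]
      · have hnr' : ¬ sideRel N k i' j := fun h => hnr (Or.inr ⟨i', j, rfl, rfl, h⟩)
        by_cases hjN : (j : ℕ) = N - 1
        · exact Or.inr (Or.inl (by rw [hhubR]; exact congrArg Sum.inr (Fin.ext hjN)))
        · left
          have hiN : (i' : ℕ) ≠ N - 1 := fun h => hnr' (Or.inl h)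
          by_cases hik : (i' : ℕ) < k
          · have hjk : ¬ (j : ℕ) < k := fun h => hnr' (Or.inr (Or.inl ⟨hik, h⟩))
            simp only [ρblue]
            rw [if_neg hjk, if_pos (by have := j.isLt; omega), if_pos hik]
          · have hjk : (j : ℕ) < k := by
              by_contra hjk
              exact hnr' (Or.inr (Or.inr ⟨by omega, by have := i'.isLt; omega, by omega,
                by have := j.isLt; omega⟩))
            simp only [ρblue]
            rw [if_pos hjk, if_neg hik, if_pos (by have := i'.isLt; omega)]
      · simp at hK
    · simp only [hhubR, ρblue]
      rw [if_neg (by omega), if_neg (by omega)]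
    · simp only [hhubL, ρblue]
      rw [if_neg (by omega), if_neg (by omega)]
    · intro w
      rcases w with i | j
      · by_cases h1 : (i : ℕ) < k
        · exact Or.inl (by simp only [ρblue]; rw [if_pos h1])
        · by_cases h2 : (i : ℕ) < N - 1
          · exact Or.inr (Or.inl (by simp only [ρblue]; rw [if_neg h1, if_pos h2]))
          · refine Or.inr (Or.inr (Or.inr ?_))
            rw [hhubL]; exact congrArg Sum.inl (Fin.ext (show (i : ℕ) = N - 1 by have := i.isLt; omega))
      · by_cases h1 : (j : ℕ) < k
        · exact Or.inr (Or.inl (by simp only [ρblue]; rw [if_pos h1]))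
        · by_cases h2 : (j : ℕ) < N - 1
          · exact Or.inl (by simp only [ρblue]; rw [if_neg h1, if_pos h2])
          · refine Or.inr (Or.inr (Or.inl ?_))
            rw [hhubR]; exact congrArg Sum.inr (Fin.ext (show (j : ℕ) = N - 1 by have := j.isLt; omega))
    · intro l hl hmem
      have key : ∀ w ∈ l, (∃ i : Fin N, w = Sum.inl i ∧ (i : ℕ) < k) ∨
          (∃ j : Fin N, w = Sum.inr j ∧ k ≤ (j : ℕ)) := by
        intro w hw
        rcases hmem w hw with h | h
        · rcases w with i | j
          · left; refine ⟨i, rfl, ?_⟩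
            simp only [ρblue] at h; split_ifs at h with h1 h2 <;> omega
          · right; refine ⟨j, rfl, ?_⟩
            simp only [ρblue] at h; split_ifs at h with h1 h2 <;> omega
        · right; exact ⟨⟨N - 1, hN1'⟩, by rw [h, hhubR], hkN⟩
      apply nodup_length_le hl (fun w => match w with
        | Sum.inl i => (i : ℕ)
        | Sum.inr j => (j : ℕ)) (2 * m - 1)
      · intro w hw
        rcases key w hw with ⟨i, rfl, hi⟩ | ⟨j, rfl, hj⟩
        · dsimp only; omega
        · dsimp only; have := j.isLt; omega
      · intro a ha b hb hfe
        rcases key a ha with ⟨i, rfl, hi⟩ | ⟨j, rfl, hj⟩ <;>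
          rcases key b hb with ⟨i', rfl, hi'⟩ | ⟨j', rfl, hj'⟩
        · exact congrArg Sum.inl (Fin.ext hfe)
        · exfalso; dsimp only at hfe; omega
        · exfalso; dsimp only at hfe; omega
        · exact congrArg Sum.inr (Fin.ext hfe)
    · intro l hl hmem
      have key : ∀ w ∈ l, (∃ i : Fin N, w = Sum.inl i ∧ k ≤ (i : ℕ) ∧ (i : ℕ) < N - 1) ∨
          (∃ j : Fin N, w = Sum.inr j ∧ ((j : ℕ) < k ∨ (j : ℕ) = N - 1)) := by
        intro w hw
        rcases hmem w hw with h | h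
        · rcases w with i | j
          · left; refine ⟨i, rfl, ?_⟩
            simp only [ρblue] at h; split_ifs at h with h1 h2 <;> omega
          · right; refine ⟨j, rfl, ?_⟩
            simp only [ρblue] at h; split_ifs at h with h1 h2 <;> omega
        · right; exact ⟨⟨N - 1, hN1'⟩, by rw [h, hhubR], Or.inr rfl⟩
      apply nodup_length_le hl (fun w => match w with
        | Sum.inl i => (i : ℕ)
        | Sum.inr j => (j : ℕ)) (2 * m - 1)
      · intro w hw
        rcases key w hw with ⟨i, rfl, hi⟩ | ⟨j, rfl, hj⟩
        · dsimp only; omega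
        · dsimp only; have := j.isLt; omega
      · intro a ha b hb hfe
        rcases key a ha with ⟨i, rfl, hi⟩ | ⟨j, rfl, hj⟩ <;>
          rcases key b hb with ⟨i', rfl, hi'⟩ | ⟨j', rfl, hj'⟩
        · exact congrArg Sum.inl (Fin.ext hfe)
        · exfalso; dsimp only at hfe; omega
        · exfalso; dsimp only at hfe; omega
        · exact congrArg Sum.inr (Fin.ext hfe)

/-- For `m ≥ 2` there is a red/blue coloring of `K_{2m-1, 2m-1}` with no
monochromatic `C_{2m}`; hence `br(C_{2m}, C_{2m}) ≥ 2m`. -/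
theorem bipartite_ramsey_cycles_lower_diag (m : ℕ) (hm : 2 ≤ m) :
    (∃ red : SimpleGraph (Fin (2 * m - 1) ⊕ Fin (2 * m - 1)),
      red ≤ completeBipartiteGraph (Fin (2 * m - 1)) (Fin (2 * m - 1)) ∧
      ¬ hasCycleLength red (2 * m) ∧
      ¬ hasCycleLength
          (completeBipartiteGraph (Fin (2 * m - 1)) (Fin (2 * m - 1)) \ red) (2 * m)) ∧
    (∀ N : ℕ,
      (∀ red : SimpleGraph (Fin N ⊕ Fin N),
        red ≤ completeBipartiteGraph (Fin N) (Fin N) →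
          hasCycleLength red (2 * m) ∨
          hasCycleLength (completeBipartiteGraph (Fin N) (Fin N) \ red) (2 * m)) →
      2 * m ≤ N) := by
  constructor
  · exact construction m (2 * m - 1) (m - 1) hm (by omega) (by omega) (by omega) (by omega)
      (by omega)
  · intro N hN
    by_contra hlt
    push_neg at hlt
    rcases Nat.eq_zero_or_pos N with rfl | hN1
    · rcases hN ⊥ bot_le with ⟨v, _⟩ | ⟨v, _⟩ <;> rcases v with v | v <;> exact v.elim0
    · obtain ⟨red, hle, h1, h2⟩ := construction m N (min (m - 1) (N - 1)) hm hN1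
        (by omega) (by omega) (by omega) (by omega)
      rcases hN red hle with h | h
      · exact h1 h
      · exact h2 h
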